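/- Suppose r+1 divides g and let s = g/(r+1). Then the number of transposed SSYT of rectangular shape (r+1)×(rs) with content (r^g) equals g! · (1!·2!···r!)/(s!·(s+1)!···(s+r)!). -/

import Mathlib

/-- A transposed semistandard Young tableau with at most r+1 rows and content (i^g):
rows strictly increase left to right, columns weakly increase bottom to top,
each of 1,…,g appears exactly i times. Cells are `some v` (filled) or `none`. -/
structure TrSSYT (g r i : ℕ) where
  entry : Fin (r+1) → ℕ → Option ℕ
  left : ∀ (row : Fin (r+1)) (j j' : ℕ), (entry row j).isSome → j' ≤ j → (entry row j').isSome
  down : ∀ (row row' : Fin (r+1)) (j : ℕ), (entry row j).isSome → row' ≤ row → (entry row' j).isSome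
  vals : ∀ (row : Fin (r+1)) (j : ℕ) (v : ℕ), entry row j = some v → 1 ≤ v ∧ v ≤ g
  content : ∀ v : ℕ, 1 ≤ v → v ≤ g →
    {p : Fin (r+1) × ℕ | entry p.1 p.2 = some v}.ncard = i
  row_strict : ∀ (row : Fin (r+1)) (j j' : ℕ) (a b : ℕ),
    entry row j = some a → entry row j' = some b → j < j' → a < b
  col_weak : ∀ (row row' : Fin (r+1)) (j : ℕ) (a b : ℕ),
    entry row j = some a → entry row' j = some b → row < row' → a ≤ b


noncomputable section
namespace Cast10

open Finset Matrix

/-- inverse factorial on ℤ, 0 for negative arguments. -/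
def invFact (m : ℤ) : ℚ := if 0 ≤ m then (1 : ℚ) / (Nat.factorial m.toNat) else 0

lemma invFact_neg {m : ℤ} (h : m < 0) : invFact m = 0 := by
  simp [invFact, not_le.mpr h]

lemma invFact_ofNat (m : ℕ) : invFact m = 1 / (Nat.factorial m) := by
  simp [invFact]

lemma invFact_sub_one (m : ℤ) : invFact (m - 1) = m * invFact m := by
  rcases lt_trichotomy m 0 with h | h | h
  · rw [invFact_neg h, invFact_neg (by omega), mul_zero]
  · subst h
    simp only [zero_sub, Int.cast_zero, zero_mul]
    exact invFact_neg (by norm_num)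
  · obtain ⟨n, rfl⟩ : ∃ n : ℕ, m = (n : ℤ) + 1 := ⟨(m - 1).toNat, by omega⟩
    have h1 : ((n : ℤ) + 1 - 1) = (n : ℤ) := by ring
    rw [h1, invFact_ofNat]
    have h2 : ((n : ℤ) + 1) = ((n + 1 : ℕ) : ℤ) := by push_cast; ring
    rw [h2, invFact_ofNat, Nat.factorial_succ]
    have : (Nat.factorial n : ℚ) ≠ 0 := Nat.cast_ne_zero.mpr (Nat.factorial_ne_zero n)
    push_cast
    field_simp

/-- The matrix whose determinant counts ballot sequences. -/
def M {K : ℕ} (c : Fin K → ℤ) : Matrix (Fin K) (Fin K) ℚ :=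
  Matrix.of fun i j => invFact (c i + i - j)

lemma M_apply {K : ℕ} (c : Fin K → ℤ) (i j : Fin K) :
    M c i j = invFact (c i + i - j) := rfl

lemma det_M_row_eq_zero {K : ℕ} (c : Fin K → ℤ) (k : Fin K) (h : c k + k < 0) :
    (M c).det = 0 := by
  apply Matrix.det_eq_zero_of_row_eq_zero k
  intro j
  exact invFact_neg (by have := j.2; omega)

lemma det_M_rows_eq {K : ℕ} (c : Fin K → ℤ) (k k' : Fin K) (hne : k ≠ k')
    (h : c k + k = c k' + k') : (M c).det = 0 := by
  apply Matrix.det_zero_of_row_eq hne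
  funext j
  simp only [M_apply, h]

/-- Sum over rows of determinants where row k is scaled entrywise by `f j`. -/
lemma sum_det_updateRow_colscale {K : ℕ} (A : Matrix (Fin K) (Fin K) ℚ) (f : Fin K → ℚ) :
    ∑ k, (A.updateRow k (fun j => f j * A k j)).det = (∑ j, f j) * A.det := by
  have key : ∀ k : Fin K, (A.updateRow k (fun j => f j * A k j)).det
      = ∑ σ : Equiv.Perm (Fin K), (Equiv.Perm.sign σ : ℚ) *
          (f (σ.symm k) * ∏ i, A (σ i) i) := by
    intro k
    rw [Matrix.det_apply]
    refine Finset.sum_congr rfl fun σ _ => ?_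
    have hprod : (∏ i, A.updateRow k (fun j => f j * A k j) (σ i) i)
        = f (σ.symm k) * ∏ i, A (σ i) i := by
      have hupd : (fun i => A.updateRow k (fun j => f j * A k j) (σ i) i)
          = Function.update (fun i => A (σ i) i) (σ.symm k)
              (f (σ.symm k) * A k (σ.symm k)) := by
        funext i
        by_cases hi : i = σ.symm k
        · subst hi
          rw [Function.update_self, Equiv.apply_symm_apply, Matrix.updateRow_self]
        · rw [Function.update_of_ne hi]
          have : σ i ≠ k := fun hh => hi (by rw [← hh, Equiv.symm_apply_apply])
          rw [Matrix.updateRow_ne this]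
      rw [hupd, Finset.prod_update_of_mem (Finset.mem_univ _), mul_assoc]
      congr 1
      conv_lhs => rw [show A k (σ.symm k) = A (σ (σ.symm k)) (σ.symm k) by
        rw [Equiv.apply_symm_apply]]
      rw [Finset.sdiff_singleton_eq_erase]
      exact Finset.mul_prod_erase Finset.univ (fun i => A (σ i) i) (Finset.mem_univ _)
    rw [hprod, Units.smul_def, zsmul_eq_mul]
  calc ∑ k, (A.updateRow k (fun j => f j * A k j)).det
      = ∑ k, ∑ σ : Equiv.Perm (Fin K), (Equiv.Perm.sign σ : ℚ) *
          (f (σ.symm k) * ∏ i, A (σ i) i) := by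
        exact Finset.sum_congr rfl fun k _ => key k
    _ = ∑ σ : Equiv.Perm (Fin K), (Equiv.Perm.sign σ : ℚ) *
          ((∑ k, f (σ.symm k)) * ∏ i, A (σ i) i) := by
        rw [Finset.sum_comm]
        refine Finset.sum_congr rfl fun σ _ => ?_
        rw [← Finset.mul_sum, ← Finset.sum_mul]
    _ = (∑ j, f j) * A.det := by
        rw [Matrix.det_apply]
        rw [Finset.mul_sum]
        refine Finset.sum_congr rfl fun σ _ => ?_
        rw [Equiv.sum_comp σ.symm f, Units.smul_def, zsmul_eq_mul]
        ring

lemma det_M_rec {K : ℕ} (c : Fin K → ℤ) :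
    ∑ k, (M (Function.update c k (c k - 1))).det = (∑ k, c k) * (M c).det := by
  have hM : ∀ k : Fin K, M (Function.update c k (c k - 1))
      = (M c).updateRow k (fun j => ((c k + k - j : ℤ) : ℚ) * M c k j) := by
    intro k
    ext i j
    by_cases hi : i = k
    · subst hi
      rw [Matrix.updateRow_self]
      simp only [M_apply, Function.update_self]
      have h2 : c i - 1 + (i : ℤ) - (j : ℤ) = (c i + i - j) - 1 := by ring
      rw [h2, invFact_sub_one]
    · rw [Matrix.updateRow_ne hi]
      simp only [M_apply, Function.update_of_ne hi]
  have step : ∀ k : Fin K, (M (Function.update c k (c k - 1))).det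
      = ((c k + k : ℤ) : ℚ) * (M c).det
        - ((M c).updateRow k (fun j => (j : ℚ) * M c k j)).det := by
    intro k
    rw [hM k]
    have hrow : (fun j : Fin K => ((c k + k - j : ℤ) : ℚ) * M c k j)
        = (((c k + k : ℤ) : ℚ) • (M c k)) + (-(fun j : Fin K => (j : ℚ) * M c k j)) := by
      funext j
      simp only [Pi.add_apply, Pi.smul_apply, Pi.neg_apply, smul_eq_mul]
      push_cast
      ring
    rw [hrow, Matrix.det_updateRow_add, Matrix.det_updateRow_smul]
    rw [Matrix.updateRow_eq_self]
    have : (M c).updateRow k (-(fun j : Fin K => (j : ℚ) * M c k j))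
        = (M c).updateRow k ((-1 : ℚ) • (fun j : Fin K => (j : ℚ) * M c k j)) := by
      congr 1
      funext j; simp
    rw [this, Matrix.det_updateRow_smul]
    ring
  calc ∑ k, (M (Function.update c k (c k - 1))).det
      = ∑ k, (((c k + k : ℤ) : ℚ) * (M c).det
        - ((M c).updateRow k (fun j => (j : ℚ) * M c k j)).det) :=
        Finset.sum_congr rfl fun k _ => step k
    _ = (∑ k, ((c k + k : ℤ) : ℚ)) * (M c).det
        - ∑ k, ((M c).updateRow k (fun j => (j : ℚ) * M c k j)).det := by
        rw [Finset.sum_sub_distrib, Finset.sum_mul]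
    _ = (∑ k, c k) * (M c).det := by
        rw [sum_det_updateRow_colscale (M c) (fun j : Fin K => (j : ℚ))]
        push_cast
        rw [Finset.sum_add_distrib]
        ring

lemma invFact_nat_sub (a b : ℕ) :
    invFact ((a : ℤ) - b) = (a.descFactorial b : ℚ) / (a.factorial : ℚ) := by
  rcases le_or_gt b a with h | h
  · have h0 : (0:ℤ) ≤ (a:ℤ) - b := by omega
    have h1 : ((a:ℤ) - b).toNat = a - b := by omega
    rw [invFact, if_pos h0, h1]
    have h2 : (a - b).factorial * a.descFactorial b = a.factorial :=
      Nat.factorial_mul_descFactorial h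
    have h3 : ((a-b).factorial : ℚ) ≠ 0 := Nat.cast_ne_zero.mpr (Nat.factorial_ne_zero _)
    have h4 : (a.factorial : ℚ) ≠ 0 := Nat.cast_ne_zero.mpr (Nat.factorial_ne_zero _)
    have h5 : ((a-b).factorial : ℚ) * (a.descFactorial b : ℚ) = a.factorial := by
      push_cast [← h2]; ring
    field_simp
    linarith [h5]
  · rw [invFact_neg (by omega), Nat.descFactorial_of_lt h, Nat.cast_zero, zero_div]

lemma det_M_const (r s : ℕ) :
    (M (fun _ : Fin (r+1) => (s : ℤ))).det =
      (∏ t ∈ Finset.range (r+1), (Nat.factorial t : ℚ)) /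
        (∏ t ∈ Finset.range (r+1), (Nat.factorial (s+t) : ℚ)) := by
  have hM : M (fun _ : Fin (r+1) => (s : ℤ)) =
      Matrix.of (fun i j : Fin (r+1) =>
        (1 / (Nat.factorial (s + i) : ℚ)) *
          ((Nat.descFactorial (s + i.val) j.val : ℚ))) := by
    ext i j
    show invFact ((s : ℤ) + i - j) = _
    have h1 : ((s : ℤ) + i - j) = (((s + i.val : ℕ) : ℤ) - (j.val : ℕ)) := by push_cast; ring
    rw [h1, invFact_nat_sub]
    rw [Matrix.of_apply]
    ring
  rw [hM]
  rw [Matrix.det_mul_column (fun i : Fin (r+1) => (1 / (Nat.factorial (s + i) : ℚ)))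
    (A := fun i j : Fin (r+1) => ((Nat.descFactorial (s + i.val) j.val : ℚ)))]
  have hD : Matrix.det (fun i j : Fin (r+1) => ((Nat.descFactorial (s + i.val) j.val : ℚ))) =
      (Matrix.vandermonde (fun i : Fin (r+1) => ((s + i.val : ℕ) : ℚ))).det := by
    have h2 := Matrix.det_eval_matrixOfPolynomials_eq_det_vandermonde
      (fun i : Fin (r+1) => ((s + i.val : ℕ) : ℚ)) (fun j => descPochhammer ℚ j.val)
      (fun j => descPochhammer_natDegree ℚ j.val) (fun j => monic_descPochhammer ℚ j.val)
    have h3 : Matrix.of (fun i j : Fin (r+1) =>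
        (descPochhammer ℚ j.val).eval (((s + i.val : ℕ) : ℚ))) =
        Matrix.of (fun i j : Fin (r+1) => ((Nat.descFactorial (s + i.val) j.val : ℚ))) := by
      ext i j
      rw [Matrix.of_apply, Matrix.of_apply, descPochhammer_eval_eq_descFactorial]
    rw [h3] at h2
    exact h2.symm
  rw [hD]
  have hv : (fun i : Fin (r+1) => ((s + i.val : ℕ) : ℚ)) =
      (fun i : Fin (r+1) => (i.val : ℚ) + (s : ℚ)) := by
    funext i; push_cast; ring
  rw [hv, Matrix.det_vandermonde_add, Matrix.det_vandermonde_id_eq_superFactorial]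
  have hsf : ((Nat.superFactorial r : ℚ)) = ∏ t ∈ Finset.range (r+1), (Nat.factorial t : ℚ) := by
    rw [← Nat.prod_range_succ_factorial, Nat.cast_prod]
  have hp : (∏ i : Fin (r+1), (1 / (Nat.factorial (s + i.val) : ℚ))) =
      1 / ∏ t ∈ Finset.range (r+1), (Nat.factorial (s + t) : ℚ) := by
    rw [Fin.prod_univ_eq_prod_range (fun i => (1 / (Nat.factorial (s + i) : ℚ)))]
    simp only [one_div]
    rw [← Finset.prod_inv_distrib]
  rw [hp, hsf]
  ring


/-! ### Ballot words -/

def cnt {n K : ℕ} (w : Fin n → Fin K) (k : Fin K) (v : ℕ) : ℕ :=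
  ∑ u : Fin n, if u.val < v ∧ w u = k then 1 else 0

def Ballot {n K : ℕ} (w : Fin n → Fin K) : Prop :=
  ∀ v : ℕ, v ≤ n → ∀ k k' : Fin K, k ≤ k' → cnt w k v ≤ cnt w k' v

lemma cnt_of_ge {n K : ℕ} (w : Fin n → Fin K) (k : Fin K) {v : ℕ} (hv : n ≤ v) :
    cnt w k v = cnt w k n := by
  unfold cnt
  refine Finset.sum_congr rfl fun u _ => ?_
  have h1 : u.val < v := lt_of_lt_of_le u.isLt hv
  simp [h1, u.isLt]

lemma cnt_snoc_of_le {n K : ℕ} (w : Fin n → Fin K) (k k'' : Fin K) {v : ℕ} (hv : v ≤ n) :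
    cnt (Fin.snoc w k) k'' v = cnt w k'' v := by
  unfold cnt
  rw [Fin.sum_univ_castSucc]
  have hlast : ¬ ((Fin.last n).val < v) := by simp only [Fin.val_last]; omega
  rw [if_neg (fun h => hlast h.1), add_zero]
  refine Finset.sum_congr rfl fun u _ => ?_
  simp [Fin.snoc_castSucc]

lemma cnt_snoc_last {n K : ℕ} (w : Fin n → Fin K) (k k'' : Fin K) :
    cnt (Fin.snoc w k) k'' (n+1) = cnt w k'' n + (if k'' = k then 1 else 0) := by
  unfold cnt
  rw [Fin.sum_univ_castSucc]
  congr 1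
  · refine Finset.sum_congr rfl fun u _ => ?_
    simp [Fin.snoc_castSucc, Nat.lt_succ_of_lt u.isLt, u.isLt]
  · simp only [Fin.snoc_last, Fin.val_last]
    by_cases h : k'' = k
    · subst h; simp
    · rw [if_neg h, if_neg (fun hh => h hh.2.symm)]

lemma nat_card_sigma {ι : Type*} [Fintype ι] (β : ι → Type*) [∀ i, Finite (β i)] :
    Nat.card (Σ i, β i) = ∑ i, Nat.card (β i) := by
  classical
  letI : ∀ i, Fintype (β i) := fun i => Fintype.ofFinite _
  simp [Nat.card_eq_fintype_card]

lemma count_ballot (K : ℕ) (n : ℕ) : ∀ (c : Fin K → ℕ), Monotone c → (∑ k, c k) = n →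
    (Nat.card {w : Fin n → Fin K // Ballot w ∧ ∀ k, cnt w k n = c k} : ℚ)
      = (n.factorial : ℚ) * (M (fun k => (c k : ℤ))).det := by
  induction n with
  | zero =>
    intro c hmono hsum
    have hc : ∀ k, c k = 0 := by
      intro k
      have := (Finset.sum_eq_zero_iff).mp hsum k (Finset.mem_univ k)
      exact this
    have h1 : Nat.card {w : Fin 0 → Fin K // Ballot w ∧ ∀ k, cnt w k 0 = c k} = 1 := by
      haveI : Unique {w : Fin 0 → Fin K // Ballot w ∧ ∀ k, cnt w k 0 = c k} := by
        refine ⟨⟨⟨fun u => u.elim0, ?_, ?_⟩⟩, ?_⟩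
        · intro v hv k k' hk
          simp [cnt]
        · intro k
          simp [cnt, hc k]
        · intro a
          apply Subtype.ext
          funext u
          exact u.elim0
      exact Nat.card_unique
    rw [h1]
    have hdet : (M (fun k : Fin K => ((c k : ℤ)))).det = 1 := by
      have htri : (M (fun k : Fin K => ((c k : ℤ)))).BlockTriangular OrderDual.toDual := by
        intro i j hij
        have hij' : i < j := hij
        apply invFact_neg
        simp only [hc i]
        have : (i : ℕ) < (j : ℕ) := hij'
        omega
      rw [Matrix.det_of_lowerTriangular _ htri]
      have : ∀ i : Fin K, M (fun k : Fin K => ((c k : ℤ))) i i = 1 := by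
        intro i
        rw [M_apply]
        simp [hc i, invFact]
      rw [Finset.prod_congr rfl (fun i _ => this i), Finset.prod_const_one]
    rw [hdet]
    norm_num
  | succ n ih =>
    intro c hmono hsum
    classical
    -- decompose by last letter
    set W := {w : Fin (n+1) → Fin K // Ballot w ∧ ∀ k, cnt w k (n+1) = c k} with hW
    have hsig : Nat.card W = ∑ k : Fin K, Nat.card
        {w' : Fin n → Fin K // Ballot (Fin.snoc w' k) ∧
          ∀ k'', cnt (Fin.snoc w' k) k'' (n+1) = c k''} := by
      have e1 : W ≃ Σ k : Fin K, {x : W // x.1 (Fin.last n) = k} :=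
        (Equiv.sigmaFiberEquiv (fun x : W => x.1 (Fin.last n))).symm
      have e2 : ∀ k : Fin K, {x : W // x.1 (Fin.last n) = k} ≃
          {w' : Fin n → Fin K // Ballot (Fin.snoc w' k) ∧
            ∀ k'', cnt (Fin.snoc w' k) k'' (n+1) = c k''} := by
        intro k
        refine ⟨fun x => ⟨Fin.init x.1.1, ?_⟩,
          fun y => ⟨⟨Fin.snoc y.1 k, y.2⟩, by simp [Fin.snoc_last]⟩, ?_, ?_⟩
        · have hx : Fin.snoc (Fin.init x.1.1) (x.1.1 (Fin.last n)) = x.1.1 :=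
            Fin.snoc_init_self _
          rw [x.2] at hx
          rw [hx]; exact x.1.2
        · rintro ⟨⟨w, hw⟩, hk⟩
          apply Subtype.ext
          apply Subtype.ext
          show Fin.snoc (Fin.init w) k = w
          rw [← hk]
          exact Fin.snoc_init_self _
        · rintro ⟨w', hp⟩
          apply Subtype.ext
          exact @Fin.init_snoc n (fun _ => Fin K) k w'
      rw [Nat.card_congr e1, nat_card_sigma]
      exact Finset.sum_congr rfl fun k _ => Nat.card_congr (e2 k)
    -- per-letter evaluation
    have hterm : ∀ k : Fin K,
        (Nat.card {w' : Fin n → Fin K // Ballot (Fin.snoc w' k) ∧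
          ∀ k'', cnt (Fin.snoc w' k) k'' (n+1) = c k''} : ℚ)
        = (n.factorial : ℚ) *
            (M (Function.update (fun k' => ((c k' : ℤ))) k ((c k : ℤ) - 1))).det := by
      intro k
      by_cases hval : 0 < c k ∧ ∀ j : Fin K, j < k → c j < c k
      · -- valid removal
        obtain ⟨hpos, hstrict⟩ := hval
        set c' := Function.update c k (c k - 1) with hc'
        have hc'cast : (fun k' => ((c' k' : ℤ))) =
            Function.update (fun k' => ((c k' : ℤ))) k ((c k : ℤ) - 1) := by
          funext k'
          by_cases h : k' = k
          · subst h; simp [hc', Function.update_self]; omega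
          · simp [hc', Function.update_of_ne h]
        have hmono' : Monotone c' := by
          intro a b hab
          rcases eq_or_ne a k with rfl | ha
          · rcases eq_or_ne b a with rfl | hb
            · exact le_refl _
            · have h1 : c a ≤ c b := hmono hab
              simp only [hc', Function.update_self, Function.update_of_ne hb]
              omega
          · rcases eq_or_ne b k with rfl | hb
            · have h1 : a < b := lt_of_le_of_ne hab ha
              have h2 : c a < c b := hstrict a h1
              simp only [hc', Function.update_self, Function.update_of_ne ha]
              omega
            · simp only [hc', Function.update_of_ne ha, Function.update_of_ne hb]
              exact hmono hab
        have hsum' : (∑ k', c' k') = n := by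
          have h1 : (∑ k', c' k') = (c k - 1) + ∑ k' ∈ Finset.univ.erase k, c k' := by
            rw [hc', Finset.sum_update_of_mem (Finset.mem_univ k),
              Finset.sdiff_singleton_eq_erase]
          have h2 : (∑ k', c k') = c k + ∑ k' ∈ Finset.univ.erase k, c k' :=
            (Finset.add_sum_erase _ _ (Finset.mem_univ k)).symm
          omega
        have hiff : ∀ w' : Fin n → Fin K,
            (Ballot (Fin.snoc w' k) ∧ ∀ k'', cnt (Fin.snoc w' k) k'' (n+1) = c k'')
            ↔ (Ballot w' ∧ ∀ k'', cnt w' k'' n = c' k'') := by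
          intro w'
          constructor
          · rintro ⟨hb, hcnt⟩
            constructor
            · intro v hv k1 k2 hk
              have := hb v (by omega) k1 k2 hk
              rwa [cnt_snoc_of_le w' k k1 hv, cnt_snoc_of_le w' k k2 hv] at this
            · intro k''
              have hthis := hcnt k''
              rw [cnt_snoc_last] at hthis
              by_cases h : k'' = k
              · subst h
                rw [if_pos rfl] at hthis
                rw [hc', Function.update_self]
                omega
              · rw [if_neg h, add_zero] at hthis
                rw [hc', Function.update_of_ne h]
                exact hthis
          · rintro ⟨hb, hcnt⟩
            have hcnt1 : ∀ k'', cnt (Fin.snoc w' k) k'' (n+1) = c k'' := by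
              intro k''
              rw [cnt_snoc_last, hcnt k'']
              by_cases h : k'' = k
              · subst h
                rw [if_pos rfl, hc', Function.update_self]
                omega
              · rw [if_neg h, add_zero, hc', Function.update_of_ne h]
            refine ⟨?_, hcnt1⟩
            intro v hv k1 k2 hk
            rcases Nat.lt_or_ge v (n+1) with h | h
            · have hv' : v ≤ n := by omega
              rw [cnt_snoc_of_le w' k k1 hv', cnt_snoc_of_le w' k k2 hv']
              exact hb v hv' k1 k2 hk
            · have hv' : v = n + 1 := by omega
              subst hv'
              rw [hcnt1 k1, hcnt1 k2]
              exact hmono hk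
        have := ih c' hmono' hsum'
        rw [← hc'cast]
        rw [← this]
        congr 1
        rw [Nat.card_congr (Equiv.subtypeEquivRight hiff)]
      · -- invalid removal: both sides are zero
        have hempty : IsEmpty {w' : Fin n → Fin K // Ballot (Fin.snoc w' k) ∧
            ∀ k'', cnt (Fin.snoc w' k) k'' (n+1) = c k''} := by
          refine ⟨fun x => ?_⟩
          obtain ⟨w', hb, hcnt⟩ := x
          rcases Nat.eq_zero_or_pos (c k) with hck | hck
          · have h1 := hcnt k
            rw [cnt_snoc_last, if_pos rfl, hck] at h1
            omega
          · push_neg at hval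
            obtain ⟨j, hj, hcj⟩ := hval hck
            have hcj' : c j = c k := le_antisymm (hmono (le_of_lt hj)) hcj
            have h1 := hcnt j
            have h2 := hcnt k
            rw [cnt_snoc_last, if_neg (by exact fun hh => absurd hh (ne_of_lt hj))] at h1
            rw [cnt_snoc_last, if_pos rfl] at h2
            have h3 := hb n (by omega) j k (le_of_lt hj)
            rw [cnt_snoc_of_le w' k j (le_refl n), cnt_snoc_of_le w' k k (le_refl n)] at h3
            omega
        have hdet0 : (M (Function.update (fun k' => ((c k' : ℤ))) k ((c k : ℤ) - 1))).det
            = 0 := by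
          rcases Nat.eq_zero_or_pos k.val with hk0 | hk0
          · -- k is the first index; then c k = 0 must fail monotone-strict, row k negative
            have hck : c k = 0 := by
              by_contra hck
              exact hval ⟨Nat.pos_of_ne_zero hck, fun j hj => absurd hj (by
                intro hlt
                have : (j : ℕ) < (k : ℕ) := hlt
                omega)⟩
            apply det_M_row_eq_zero _ k
            rw [Function.update_self, hck]
            simp [hk0]
          · -- use rows k-1 and k
            have hK : 0 < K := k.pos
            set k' : Fin K := ⟨k.val - 1, by omega⟩ with hk'
            have hk'k : k' < k := by
              simp only [Fin.lt_def, hk']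
              omega
            have hck : c k' = c k ∨ c k = 0 := by
              by_cases hck0 : c k = 0
              · right; exact hck0
              · left
                push_neg at hval
                obtain ⟨j, hj, hcj⟩ := hval (Nat.pos_of_ne_zero hck0)
                have hjk' : j ≤ k' := by
                  simp only [Fin.le_def, hk']
                  have : (j:ℕ) < (k:ℕ) := hj
                  omega
                have h1 : c j = c k := le_antisymm (hmono (le_of_lt hj)) hcj
                have h2 : c j ≤ c k' := hmono hjk'
                have h3 : c k' ≤ c k := hmono (le_of_lt hk'k)
                omega
            have hck' : c k' = c k := by
              rcases hck with h | h
              · exact h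
              · have := hmono (le_of_lt hk'k)
                omega
            apply det_M_rows_eq _ k' k (ne_of_lt hk'k)
            rw [Function.update_of_ne (ne_of_lt hk'k), Function.update_self]
            have h1 : (k'.val : ℤ) = (k.val : ℤ) - 1 := by
              simp only [hk']
              omega
            rw [hck']
            omega
        rw [Nat.card_of_isEmpty]
        rw [hdet0]
        norm_num
    -- assemble
    have hcast : (Nat.card W : ℚ) = ∑ k : Fin K, (Nat.card
        {w' : Fin n → Fin K // Ballot (Fin.snoc w' k) ∧
          ∀ k'', cnt (Fin.snoc w' k) k'' (n+1) = c k''} : ℚ) := by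
      rw [hsig]
      push_cast
      rfl
    rw [hcast]
    rw [Finset.sum_congr rfl (fun k _ => hterm k)]
    rw [← Finset.mul_sum]
    rw [det_M_rec (fun k => ((c k : ℤ)))]
    have hs : (∑ k, ((c k : ℤ))) = ((n : ℤ) + 1) := by
      rw [← Nat.cast_sum, hsum]
      push_cast
      ring
    rw [hs]
    push_cast
    rw [Nat.factorial_succ]
    push_cast
    ring


lemma val_succ_injective {g : ℕ} : Function.Injective (fun u : Fin g => u.val + 1) :=
  fun a b h => Fin.ext (by simpa using h)

lemma orderEmb_lt_card_filter {A : Finset ℕ} {m : ℕ} (h : A.card = m) (j : Fin m) (b : ℕ)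
    (hb : A.orderEmbOfFin h j ≤ b) :
    (j : ℕ) < (A.filter (fun x => x ≤ b)).card := by
  classical
  have hsub : ∀ t ∈ Finset.range (j.val + 1), t < m := by
    intro t ht
    have h1 := Finset.mem_range.mp ht
    have h2 := j.isLt
    omega
  have hle := Finset.card_le_card_of_injOn
    (s := (Finset.range (j.val + 1)).attachFin hsub)
    (t := A.filter (fun x => x ≤ b))
    (fun i : Fin m => A.orderEmbOfFin h i)
    (fun i hi => by
      rw [Finset.mem_coe, Finset.mem_filter]
      refine ⟨Finset.orderEmbOfFin_mem A h i, ?_⟩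
      have hij : i ≤ j := by
        have h1 := (Finset.mem_attachFin hsub).mp hi
        have h2 := Finset.mem_range.mp h1
        exact Fin.le_def.mpr (by omega)
      exact le_trans ((A.orderEmbOfFin h).monotone hij) hb)
    (fun a _ b' _ hab => (A.orderEmbOfFin h).injective hab)
  rw [Finset.card_attachFin, Finset.card_range] at hle
  omega

lemma orderEmb_le_of_card_filter {A : Finset ℕ} {m : ℕ} (h : A.card = m) (j : Fin m) (b : ℕ)
    (hcard : (j : ℕ) < (A.filter (fun x => x ≤ b)).card) :
    A.orderEmbOfFin h j ≤ b := by
  classical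
  by_contra hgt
  push_neg at hgt
  have hsubset : A.filter (fun x => x ≤ b) ⊆
      (Finset.univ.filter (fun i : Fin m => (i : ℕ) < j)).image
        (fun i : Fin m => A.orderEmbOfFin h i) := by
    intro x hx
    rw [Finset.mem_filter] at hx
    obtain ⟨hxA, hxb⟩ := hx
    set i : Fin m := (A.orderIsoOfFin h).symm ⟨x, hxA⟩ with hi
    have hemb : A.orderEmbOfFin h i = x := by
      have := (A.orderIsoOfFin h).apply_symm_apply ⟨x, hxA⟩
      have h2 : ((A.orderIsoOfFin h) i : ℕ) = x := by rw [hi, this]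
      rwa [← Finset.coe_orderIsoOfFin_apply]
    have hij : i < j := by
      have : A.orderEmbOfFin h i < A.orderEmbOfFin h j := by
        rw [hemb]; exact lt_of_le_of_lt hxb hgt
      exact (A.orderEmbOfFin h).strictMono.lt_iff_lt.mp this
    rw [Finset.mem_image]
    exact ⟨i, Finset.mem_filter.mpr ⟨Finset.mem_univ i, hij⟩, hemb⟩
  have h1 : (A.filter (fun x => x ≤ b)).card ≤
      (Finset.univ.filter (fun i : Fin m => (i : ℕ) < j)).card :=
    le_trans (Finset.card_le_card hsubset) (Finset.card_image_le)
  have h2 : (Finset.univ.filter (fun i : Fin m => (i : ℕ) < j)).card ≤ j.val := by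
    have := Finset.card_le_card_of_injOn (fun i : Fin m => i.val)
      (s := Finset.univ.filter (fun i : Fin m => (i : ℕ) < j))
      (t := Finset.range j.val)
      (fun i hi => Finset.mem_range.mpr (Finset.mem_filter.mp hi).2)
      (fun a _ b' _ hab => Fin.ext hab)
    rwa [Finset.card_range] at this
  omega

lemma orderEmb_le_orderEmb {A B : Finset ℕ} {m : ℕ} (hA : A.card = m) (hB : B.card = m)
    (hcnt : ∀ v, (B.filter (fun x => x ≤ v)).card ≤ (A.filter (fun x => x ≤ v)).card)
    (j : Fin m) : A.orderEmbOfFin hA j ≤ B.orderEmbOfFin hB j := by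
  exact orderEmb_le_of_card_filter hA j _
    (lt_of_lt_of_le (orderEmb_lt_card_filter hB j _ (le_refl _)) (hcnt _))

lemma card_filter_le_of_entrywise {A B : Finset ℕ} {m : ℕ} (hA : A.card = m) (hB : B.card = m)
    (hent : ∀ j : Fin m, A.orderEmbOfFin hA j ≤ B.orderEmbOfFin hB j) (v : ℕ) :
    (B.filter (fun x => x ≤ v)).card ≤ (A.filter (fun x => x ≤ v)).card := by
  classical
  set m' := (B.filter (fun x => x ≤ v)).card with hm'
  rcases Nat.eq_zero_or_pos m' with h0 | h0
  · omega
  have hm : m' ≤ m := by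
    rw [hm', ← hB]
    exact Finset.card_filter_le _ _
  set j : Fin m := ⟨m' - 1, by omega⟩ with hj
  have h1 : B.orderEmbOfFin hB j ≤ v :=
    orderEmb_le_of_card_filter hB j v (by simp only [hj]; omega)
  have h2 : A.orderEmbOfFin hA j ≤ v := le_trans (hent j) h1
  have h3 := orderEmb_lt_card_filter hA j v h2
  simp only [hj] at h3
  omega

/-! ### Word-side sets -/

def Sk {g K : ℕ} (w : Fin g → Fin K) (k : Fin K) : Finset ℕ :=
  (Finset.univ.filter (fun u : Fin g => w u ≠ k)).image (fun u => u.val + 1)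

lemma mem_Sk {g K : ℕ} (w : Fin g → Fin K) (k : Fin K) (v : ℕ) :
    v ∈ Sk w k ↔ ∃ u : Fin g, u.val + 1 = v ∧ w u ≠ k := by
  simp only [Sk, Finset.mem_image, Finset.mem_filter, Finset.mem_univ, true_and]
  tauto

lemma Sk_bounds {g K : ℕ} (w : Fin g → Fin K) (k : Fin K) {v : ℕ} (h : v ∈ Sk w k) :
    1 ≤ v ∧ v ≤ g := by
  obtain ⟨u, hu, -⟩ := (mem_Sk w k v).mp h
  have := u.isLt
  omega

lemma cnt_eq_card {g K : ℕ} (w : Fin g → Fin K) (k : Fin K) (v : ℕ) :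
    cnt w k v = (Finset.univ.filter (fun u : Fin g => u.val < v ∧ w u = k)).card := by
  rw [Finset.card_filter]
  rfl

lemma cnt_top_eq {g K : ℕ} (w : Fin g → Fin K) (k : Fin K) :
    cnt w k g = (Finset.univ.filter (fun u : Fin g => w u = k)).card := by
  rw [cnt_eq_card]
  congr 1
  apply Finset.filter_congr
  intro u _
  simp [u.isLt]

lemma Sk_card {g K : ℕ} (w : Fin g → Fin K) (k : Fin K) {s' : ℕ} (h : cnt w k g = s') :
    (Sk w k).card = g - s' := by
  classical
  rw [Sk, Finset.card_image_of_injective _ val_succ_injective]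
  have h2 := Finset.card_filter_add_card_filter_not
    (s := (Finset.univ : Finset (Fin g))) (p := fun u => w u = k)
  rw [cnt_top_eq] at h
  simp only [Finset.card_univ, Fintype.card_fin] at h2
  have : (Finset.univ.filter (fun u : Fin g => ¬ (w u = k))).card
      = (Finset.univ.filter (fun u : Fin g => w u ≠ k)).card := rfl
  omega

lemma filter_Sk_card {g K : ℕ} (w : Fin g → Fin K) (k : Fin K) (x : ℕ) :
    ((Sk w k).filter (fun t => t ≤ x)).card + cnt w k x
      = (Finset.univ.filter (fun u : Fin g => u.val < x)).card := by
  classical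
  have h1 : (Sk w k).filter (fun t => t ≤ x)
      = (Finset.univ.filter (fun u : Fin g => u.val < x ∧ w u ≠ k)).image
          (fun u => u.val + 1) := by
    ext t
    simp only [Finset.mem_filter, mem_Sk, Finset.mem_image, Finset.mem_univ, true_and]
    constructor
    · rintro ⟨⟨u, hu, hwu⟩, htx⟩
      exact ⟨u, ⟨by omega, hwu⟩, hu⟩
    · rintro ⟨u, ⟨hux, hwu⟩, hu⟩
      exact ⟨⟨u, hu, hwu⟩, by omega⟩
  rw [h1, Finset.card_image_of_injective _ val_succ_injective, cnt_eq_card]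
  have h2 := Finset.card_filter_add_card_filter_not
    (s := Finset.univ.filter (fun u : Fin g => u.val < x)) (p := fun u => w u = k)
  rw [Finset.filter_filter, Finset.filter_filter] at h2
  have e1 : (Finset.univ.filter (fun u : Fin g => u.val < x ∧ w u ≠ k))
      = (Finset.univ.filter (fun a : Fin g => a.val < x ∧ ¬ (w a = k))) := rfl
  rw [e1]
  omega


variable {g r s : ℕ}

lemma ballot_all {w : Fin g → Fin (r+1)} (hbal : Ballot w) (k k' : Fin (r+1)) (hk : k ≤ k')
    (x : ℕ) : cnt w k x ≤ cnt w k' x := by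
  rcases le_or_gt x g with h | h
  · exact hbal x h k k' hk
  · rw [cnt_of_ge w k (le_of_lt h), cnt_of_ge w k' (le_of_lt h)]
    exact hbal g (le_refl g) k k' hk

lemma Sk_card_rs (hg : g = (r+1)*s) (w : Fin g → Fin (r+1)) (hcnt : ∀ k, cnt w k g = s)
    (k : Fin (r+1)) : (Sk w k).card = r*s := by
  rw [Sk_card w k (hcnt k)]
  have : g = r*s + s := by rw [hg]; ring
  omega

def wEntry (w : Fin g → Fin (r+1)) (hc : ∀ k, (Sk w k).card = r*s) :
    Fin (r+1) → ℕ → Option ℕ :=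
  fun k j => if h : j < r*s then some ((Sk w k).orderEmbOfFin (hc k) ⟨j, h⟩) else none

lemma wEntry_isSome (w : Fin g → Fin (r+1)) (hc : ∀ k, (Sk w k).card = r*s)
    (k : Fin (r+1)) (j : ℕ) : (wEntry w hc k j).isSome ↔ j < r*s := by
  unfold wEntry
  split <;> simp_all

lemma wEntry_eq_some (w : Fin g → Fin (r+1)) (hc : ∀ k, (Sk w k).card = r*s)
    (k : Fin (r+1)) (j v : ℕ) :
    wEntry w hc k j = some v ↔
      ∃ h : j < r*s, (Sk w k).orderEmbOfFin (hc k) ⟨j, h⟩ = v := by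
  unfold wEntry
  split
  · rename_i h
    simp only [Option.some.injEq]
    exact ⟨fun hh => ⟨h, hh⟩, fun ⟨_, hh⟩ => hh⟩
  · rename_i h
    simp only [reduceCtorEq, false_iff, not_exists]
    intro hh
    exact absurd hh h

lemma exists_emb_of_mem {A : Finset ℕ} {m : ℕ} (h : A.card = m) {v : ℕ} (hv : v ∈ A) :
    ∃ i : Fin m, A.orderEmbOfFin h i = v := by
  have hr := Finset.range_orderEmbOfFin A h
  have : v ∈ Set.range (A.orderEmbOfFin h) := by rw [hr]; exact_mod_cast hv
  exact this

def mkT (hg : g = (r+1)*s) (w : Fin g → Fin (r+1)) (hbal : Ballot w)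
    (hcnt : ∀ k, cnt w k g = s) : TrSSYT g r r where
  entry := wEntry w (Sk_card_rs hg w hcnt)
  left := by
    intro row j j' hs hle
    rw [wEntry_isSome] at hs ⊢
    omega
  down := by
    intro row row' j hs _
    rwa [wEntry_isSome] at hs ⊢
  vals := by
    intro row j v hv
    obtain ⟨h, he⟩ := (wEntry_eq_some w _ row j v).mp hv
    exact Sk_bounds w row (he ▸ Finset.orderEmbOfFin_mem _ _ _)
  content := by
    intro v hv1 hv2
    set hc := Sk_card_rs hg w hcnt with hhc
    set u : Fin g := ⟨v - 1, by omega⟩ with hu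
    have huv : u.val + 1 = v := by simp [hu]; omega
    have hinj : Set.InjOn Prod.fst {p : Fin (r+1) × ℕ | wEntry w hc p.1 p.2 = some v} := by
      rintro ⟨k1, j1⟩ h1 ⟨k2, j2⟩ h2 hf
      simp only [Set.mem_setOf_eq] at h1 h2
      simp only at hf
      subst hf
      obtain ⟨hl1, he1⟩ := (wEntry_eq_some w hc k1 j1 v).mp h1
      obtain ⟨hl2, he2⟩ := (wEntry_eq_some w hc k1 j2 v).mp h2
      have : (⟨j1, hl1⟩ : Fin (r*s)) = ⟨j2, hl2⟩ :=
        (Finset.orderEmbOfFin (Sk w k1) (hc k1)).injective (he1.trans he2.symm)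
      have hj : j1 = j2 := by simpa using this
      simp [hj]
    have himg : Prod.fst '' {p : Fin (r+1) × ℕ | wEntry w hc p.1 p.2 = some v}
        = {k : Fin (r+1) | k ≠ w u} := by
      ext k
      constructor
      · rintro ⟨⟨k', j⟩, hp, rfl⟩
        simp only [Set.mem_setOf_eq] at hp
        obtain ⟨hl, he⟩ := (wEntry_eq_some w hc k' j v).mp hp
        have hvS : v ∈ Sk w k' := he ▸ Finset.orderEmbOfFin_mem _ _ _
        obtain ⟨u', hu', hw⟩ := (mem_Sk w k' v).mp hvS
        have : u' = u := Fin.ext (by omega)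
        subst this
        exact fun hh => hw (by rw [← hh])
      · intro hk
        have hvS : v ∈ Sk w k := (mem_Sk w k v).mpr ⟨u, huv, fun hh => hk hh.symm⟩
        obtain ⟨i, hi⟩ := exists_emb_of_mem (hc k) hvS
        refine ⟨(k, i.val), ?_, rfl⟩
        simp only [Set.mem_setOf_eq]
        rw [wEntry_eq_some]
        exact ⟨i.isLt, by rw [Fin.eta]; exact hi⟩
    have h1 : {p : Fin (r+1) × ℕ | wEntry w hc p.1 p.2 = some v}.ncard
        = ({k : Fin (r+1) | k ≠ w u}).ncard := by
      rw [← himg, Set.ncard_image_of_injOn hinj]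
    have h2 : {k : Fin (r+1) | k ≠ w u} = ↑(Finset.univ.erase (w u)) := by
      ext k
      simp [Finset.mem_erase]
    rw [h1, h2, Set.ncard_coe_finset, Finset.card_erase_of_mem (Finset.mem_univ _)]
    simp
  row_strict := by
    intro row j j' a b ha hb hjj
    obtain ⟨hl, hea⟩ := (wEntry_eq_some w _ row j a).mp ha
    obtain ⟨hl', heb⟩ := (wEntry_eq_some w _ row j' b).mp hb
    rw [← hea, ← heb]
    exact (Finset.orderEmbOfFin (Sk w row) _).strictMono (by simpa using hjj)
  col_weak := by
    intro row row' j a b ha hb hlt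
    obtain ⟨hl, hea⟩ := (wEntry_eq_some w _ row j a).mp ha
    obtain ⟨hl', heb⟩ := (wEntry_eq_some w _ row' j b).mp hb
    rw [← hea, ← heb]
    have hfc : ∀ x, ((Sk w row').filter (fun t => t ≤ x)).card
        ≤ ((Sk w row).filter (fun t => t ≤ x)).card := by
      intro x
      have e1 := filter_Sk_card w row x
      have e2 := filter_Sk_card w row' x
      have e3 : cnt w row x ≤ cnt w row' x := ballot_all hbal row row' (le_of_lt hlt) x
      omega
    exact orderEmb_le_orderEmb _ _ hfc ⟨j, hl⟩


variable {g r s : ℕ}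

def rowVal (T : TrSSYT g r r) (k : Fin (r+1)) (j : ℕ) : ℕ := (T.entry k j).getD 0

lemma entry_eq_some (T : TrSSYT g r r)
    (hT : ∀ (i : Fin (r+1)) (j : ℕ), (T.entry i j).isSome ↔ j < r * s)
    (k : Fin (r+1)) {j : ℕ} (hj : j < r*s) : T.entry k j = some (rowVal T k j) := by
  have h1 := (hT k j).mpr hj
  obtain ⟨v, hv⟩ := Option.isSome_iff_exists.mp h1
  rw [hv]
  simp [rowVal, hv]

lemma rowVal_strictMono (T : TrSSYT g r r)
    (hT : ∀ (i : Fin (r+1)) (j : ℕ), (T.entry i j).isSome ↔ j < r * s) (k : Fin (r+1)) :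
    StrictMono (fun j : Fin (r*s) => rowVal T k j.val) := by
  intro j1 j2 hlt
  exact T.row_strict k j1.val j2.val _ _
    (entry_eq_some T hT k j1.isLt) (entry_eq_some T hT k j2.isLt) (Fin.lt_def.mp hlt)

def Rk (T : TrSSYT g r r) (k : Fin (r+1)) : Finset ℕ :=
  Finset.image (fun j : Fin (r*s) => rowVal T k j.val) Finset.univ

lemma Rk_card (T : TrSSYT g r r)
    (hT : ∀ (i : Fin (r+1)) (j : ℕ), (T.entry i j).isSome ↔ j < r * s) (k : Fin (r+1)) :
    (Rk (s := s) T k).card = r*s := by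
  rw [Rk, Finset.card_image_of_injective _ (rowVal_strictMono T hT k).injective,
    Finset.card_univ, Fintype.card_fin]

lemma rowVal_eq_emb (T : TrSSYT g r r)
    (hT : ∀ (i : Fin (r+1)) (j : ℕ), (T.entry i j).isSome ↔ j < r * s) (k : Fin (r+1))
    (j : Fin (r*s)) :
    rowVal T k j.val = (Rk (s := s) T k).orderEmbOfFin (Rk_card T hT k) j :=
  congrFun (Finset.orderEmbOfFin_unique (Rk_card T hT k)
    (fun i => Finset.mem_image_of_mem _ (Finset.mem_univ i)) (rowVal_strictMono T hT k)) j

lemma mem_Rk_iff (T : TrSSYT g r r)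
    (hT : ∀ (i : Fin (r+1)) (j : ℕ), (T.entry i j).isSome ↔ j < r * s) (k : Fin (r+1))
    (v : ℕ) : v ∈ Rk (s := s) T k ↔ ∃ j, T.entry k j = some v := by
  constructor
  · intro hv
    obtain ⟨j, _, hj⟩ := Finset.mem_image.mp hv
    exact ⟨j.val, by rw [entry_eq_some T hT k j.isLt, hj]⟩
  · rintro ⟨j, hj⟩
    have hjs : j < r*s := (hT k j).mp (by rw [hj]; rfl)
    have : rowVal T k j = v := by simp [rowVal, hj]
    rw [← this]
    exact Finset.mem_image_of_mem _ (Finset.mem_univ (⟨j, hjs⟩ : Fin (r*s)))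

lemma card_occ (T : TrSSYT g r r)
    (hT : ∀ (i : Fin (r+1)) (j : ℕ), (T.entry i j).isSome ↔ j < r * s)
    {v : ℕ} (hv1 : 1 ≤ v) (hv2 : v ≤ g) :
    (Finset.univ.filter (fun k : Fin (r+1) => v ∈ Rk (s := s) T k)).card = r := by
  classical
  have hinj : Set.InjOn Prod.fst {p : Fin (r+1) × ℕ | T.entry p.1 p.2 = some v} := by
    rintro ⟨k1, j1⟩ h1 ⟨k2, j2⟩ h2 hf
    simp only [Set.mem_setOf_eq] at h1 h2
    simp only at hf
    subst hf
    have hj : j1 = j2 := by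
      rcases lt_trichotomy j1 j2 with h | h | h
      · exact absurd (T.row_strict k1 j1 j2 v v h1 h2 h) (lt_irrefl v)
      · exact h
      · exact absurd (T.row_strict k1 j2 j1 v v h2 h1 h) (lt_irrefl v)
    simp [hj]
  have himg : Prod.fst '' {p : Fin (r+1) × ℕ | T.entry p.1 p.2 = some v}
      = ↑(Finset.univ.filter (fun k : Fin (r+1) => v ∈ Rk (s := s) T k)) := by
    ext k
    simp only [Set.mem_image, Set.mem_setOf_eq, Finset.coe_filter, Finset.mem_univ, true_and,
      Finset.mem_coe, Finset.mem_filter]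
    rw [mem_Rk_iff T hT k v]
    constructor
    · rintro ⟨⟨k', j⟩, hp, rfl⟩
      exact ⟨j, hp⟩
    · rintro ⟨j, hj⟩
      exact ⟨(k, j), hj, rfl⟩
  have h1 := T.content v hv1 hv2
  rw [← Set.ncard_image_of_injOn hinj, himg, Set.ncard_coe_finset] at h1
  exact h1

lemma card_miss (T : TrSSYT g r r)
    (hT : ∀ (i : Fin (r+1)) (j : ℕ), (T.entry i j).isSome ↔ j < r * s)
    {v : ℕ} (hv1 : 1 ≤ v) (hv2 : v ≤ g) :
    (Finset.univ.filter (fun k : Fin (r+1) => v ∉ Rk (s := s) T k)).card = 1 := by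
  classical
  have h2 := Finset.card_filter_add_card_filter_not
    (s := (Finset.univ : Finset (Fin (r+1)))) (p := fun k => v ∈ Rk (s := s) T k)
  rw [card_occ T hT hv1 hv2] at h2
  simp only [Finset.card_univ, Fintype.card_fin] at h2
  have e1 : (Finset.univ.filter (fun k : Fin (r+1) => v ∉ Rk (s := s) T k))
      = (Finset.univ.filter (fun k : Fin (r+1) => ¬ (v ∈ Rk (s := s) T k))) := rfl
  omega

def missRow (T : TrSSYT g r r)
    (hT : ∀ (i : Fin (r+1)) (j : ℕ), (T.entry i j).isSome ↔ j < r * s)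
    (v : ℕ) (hv1 : 1 ≤ v) (hv2 : v ≤ g) : Fin (r+1) :=
  (Finset.card_eq_one.mp (card_miss (s := s) T hT hv1 hv2)).choose

lemma missRow_spec (T : TrSSYT g r r)
    (hT : ∀ (i : Fin (r+1)) (j : ℕ), (T.entry i j).isSome ↔ j < r * s)
    (v : ℕ) (hv1 : 1 ≤ v) (hv2 : v ≤ g) (k : Fin (r+1)) :
    v ∉ Rk (s := s) T k ↔ k = missRow (s := s) T hT v hv1 hv2 := by
  classical
  have hspec := (Finset.card_eq_one.mp (card_miss (s := s) T hT hv1 hv2)).choose_spec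
  constructor
  · intro h
    have : k ∈ Finset.univ.filter (fun k : Fin (r+1) => v ∉ Rk (s := s) T k) :=
      Finset.mem_filter.mpr ⟨Finset.mem_univ k, h⟩
    rw [hspec] at this
    exact Finset.mem_singleton.mp this
  · intro h
    have : k ∈ Finset.univ.filter (fun k : Fin (r+1) => v ∉ Rk (s := s) T k) := by
      rw [hspec]
      exact Finset.mem_singleton.mpr h
    exact (Finset.mem_filter.mp this).2

def wordOf (T : TrSSYT g r r)
    (hT : ∀ (i : Fin (r+1)) (j : ℕ), (T.entry i j).isSome ↔ j < r * s) :
    Fin g → Fin (r+1) :=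
  fun u => missRow (s := s) T hT (u.val + 1) (by omega) (by have := u.isLt; omega)

lemma wordOf_iff (T : TrSSYT g r r)
    (hT : ∀ (i : Fin (r+1)) (j : ℕ), (T.entry i j).isSome ↔ j < r * s)
    (u : Fin g) (k : Fin (r+1)) :
    wordOf (s := s) T hT u = k ↔ (u.val + 1) ∉ Rk (s := s) T k := by
  rw [missRow_spec (s := s) T hT (u.val+1) (by omega) (by have := u.isLt; omega) k]
  unfold wordOf
  exact eq_comm

lemma image_filter_mem_Rk (hg : g = (r+1)*s) (T : TrSSYT g r r)
    (hT : ∀ (i : Fin (r+1)) (j : ℕ), (T.entry i j).isSome ↔ j < r * s) (k : Fin (r+1)) :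
    (Finset.univ.filter (fun u : Fin g => u.val + 1 ∈ Rk (s := s) T k)).image
      (fun u => u.val + 1) = Rk (s := s) T k := by
  classical
  ext t
  simp only [Finset.mem_image, Finset.mem_filter, Finset.mem_univ, true_and]
  constructor
  · rintro ⟨u, hu, rfl⟩
    exact hu
  · intro ht
    have hb : 1 ≤ t ∧ t ≤ g := by
      obtain ⟨j, hj⟩ := (mem_Rk_iff (s := s) T hT k t).mp ht
      exact T.vals k j t hj
    refine ⟨⟨t - 1, by omega⟩, ?_, by show t - 1 + 1 = t; omega⟩
    show t - 1 + 1 ∈ Rk (s := s) T k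
    have : (t - 1) + 1 = t := by omega
    rw [this]
    exact ht

lemma cnt_wordOf (hg : g = (r+1)*s) (T : TrSSYT g r r)
    (hT : ∀ (i : Fin (r+1)) (j : ℕ), (T.entry i j).isSome ↔ j < r * s) (k : Fin (r+1)) :
    cnt (wordOf (s := s) T hT) k g = s := by
  classical
  rw [cnt_top_eq]
  have e0 : (Finset.univ.filter (fun u : Fin g => wordOf (s := s) T hT u = k))
      = (Finset.univ.filter (fun u : Fin g => ¬ (u.val + 1 ∈ Rk (s := s) T k))) := by
    apply Finset.filter_congr
    intro u _
    exact (wordOf_iff (s := s) T hT u k)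
  rw [e0]
  have h2 := Finset.card_filter_add_card_filter_not
    (s := (Finset.univ : Finset (Fin g))) (p := fun u : Fin g => u.val + 1 ∈ Rk (s := s) T k)
  have h3 : (Finset.univ.filter (fun u : Fin g => u.val + 1 ∈ Rk (s := s) T k)).card
      = r * s := by
    rw [← Finset.card_image_of_injective _ (val_succ_injective (g := g)),
      image_filter_mem_Rk hg T hT k, Rk_card T hT k]
  simp only [Finset.card_univ, Fintype.card_fin] at h2
  have hgs : g = r*s + s := by rw [hg]; ring
  omega

lemma Sk_wordOf (hg : g = (r+1)*s) (T : TrSSYT g r r)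
    (hT : ∀ (i : Fin (r+1)) (j : ℕ), (T.entry i j).isSome ↔ j < r * s) (k : Fin (r+1)) :
    Sk (wordOf (s := s) T hT) k = Rk (s := s) T k := by
  classical
  rw [Sk]
  rw [show (Finset.univ.filter (fun u : Fin g => wordOf (s := s) T hT u ≠ k))
      = (Finset.univ.filter (fun u : Fin g => u.val + 1 ∈ Rk (s := s) T k)) from ?_]
  · exact image_filter_mem_Rk hg T hT k
  · apply Finset.filter_congr
    intro u _
    simp only [eq_iff_iff, ne_eq]
    rw [wordOf_iff (s := s) T hT u k]
    exact not_not

lemma ballot_wordOf (hg : g = (r+1)*s) (T : TrSSYT g r r)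
    (hT : ∀ (i : Fin (r+1)) (j : ℕ), (T.entry i j).isSome ↔ j < r * s) :
    Ballot (wordOf (s := s) T hT) := by
  intro x hx k k' hk
  rcases eq_or_lt_of_le hk with rfl | hlt
  · exact le_refl _
  have hent : ∀ j : Fin (r*s),
      (Rk (s := s) T k).orderEmbOfFin (Rk_card T hT k) j
        ≤ (Rk (s := s) T k').orderEmbOfFin (Rk_card T hT k') j := by
    intro j
    rw [← rowVal_eq_emb T hT k j, ← rowVal_eq_emb T hT k' j]
    exact T.col_weak k k' j.val _ _
      (entry_eq_some T hT k j.isLt) (entry_eq_some T hT k' j.isLt) hlt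
  have hfc := card_filter_le_of_entrywise (Rk_card T hT k) (Rk_card T hT k') hent x
  have e1 := filter_Sk_card (wordOf (s := s) T hT) k x
  have e2 := filter_Sk_card (wordOf (s := s) T hT) k' x
  rw [Sk_wordOf hg T hT k] at e1
  rw [Sk_wordOf hg T hT k'] at e2
  omega


variable {g r s : ℕ}

lemma Rk_mkT (hg : g = (r+1)*s) (w : Fin g → Fin (r+1)) (hbal : Ballot w)
    (hcnt : ∀ k, cnt w k g = s) (k : Fin (r+1)) :
    Rk (s := s) (mkT hg w hbal hcnt) k = Sk w k := by
  have hc := Sk_card_rs hg w hcnt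
  have hrv : ∀ j : Fin (r*s), rowVal (mkT hg w hbal hcnt) k j.val
      = (Sk w k).orderEmbOfFin (hc k) j := by
    intro j
    unfold rowVal
    have he : (mkT hg w hbal hcnt).entry k j.val
        = some ((Sk w k).orderEmbOfFin (hc k) j) := by
      show wEntry w hc k j.val = _
      unfold wEntry
      rw [dif_pos j.isLt]
    rw [he]
    rfl
  ext t
  simp only [Rk, Finset.mem_image, Finset.mem_univ, true_and]
  constructor
  · rintro ⟨j, rfl⟩
    rw [hrv j]
    exact Finset.orderEmbOfFin_mem _ _ _
  · intro ht
    obtain ⟨i, hi⟩ := exists_emb_of_mem (hc k) ht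
    exact ⟨i, by rw [hrv i, hi]⟩

lemma TrSSYT_ext2 {g r i : ℕ} {T T' : TrSSYT g r i} (h : T.entry = T'.entry) : T = T' := by
  cases T; cases T'; cases h; rfl

lemma card_eq (g r s : ℕ) (hg : g = (r+1)*s) :
    Nat.card {T : TrSSYT g r r // ∀ (i : Fin (r + 1)) (j : ℕ),
        (T.entry i j).isSome ↔ j < r * s}
      = Nat.card {w : Fin g → Fin (r+1) // Ballot w ∧ ∀ k, cnt w k g = s} := by
  refine Nat.card_congr (Equiv.symm ⟨?_, ?_, ?_, ?_⟩)
  · exact fun x => ⟨mkT hg x.1 x.2.1 x.2.2,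
      fun i j => wEntry_isSome x.1 (Sk_card_rs hg x.1 x.2.2) i j⟩
  · exact fun y => ⟨wordOf (s := s) y.1 y.2,
      ballot_wordOf hg y.1 y.2, fun k => cnt_wordOf hg y.1 y.2 k⟩
  · -- left inverse
    rintro ⟨w, hbal, hcnt⟩
    apply Subtype.ext
    funext u
    show wordOf (s := s) (mkT hg w hbal hcnt)
      (fun i j => wEntry_isSome w (Sk_card_rs hg w hcnt) i j) u = w u
    refine (wordOf_iff (s := s) _ _ u (w u)).mpr ?_
    rw [Rk_mkT hg w hbal hcnt (w u), mem_Sk]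
    rintro ⟨u', hu', hw⟩
    exact hw (congrArg w (Fin.ext (by omega)))
  · -- right inverse
    rintro ⟨T, hT⟩
    apply Subtype.ext
    apply TrSSYT_ext2
    funext k j
    show wEntry (wordOf (s := s) T hT)
      (Sk_card_rs hg (wordOf (s := s) T hT) (fun k => cnt_wordOf hg T hT k)) k j = T.entry k j
    by_cases hj : j < r * s
    · unfold wEntry
      rw [dif_pos hj]
      set hc' := Sk_card_rs hg (wordOf (s := s) T hT) (fun k => cnt_wordOf hg T hT k) with hhc'
      have hSR := Sk_wordOf hg T hT k
      have hemb : ∀ i : Fin (r*s),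
          (Sk (wordOf (s := s) T hT) k).orderEmbOfFin (hc' k) i
            = (Rk (s := s) T k).orderEmbOfFin (Rk_card T hT k) i := by
        intro i
        refine congrFun (Finset.orderEmbOfFin_unique (Rk_card T hT k)
          (fun x => ?_) (Finset.orderEmbOfFin _ (hc' k)).strictMono) i
        rw [← hSR]
        exact Finset.orderEmbOfFin_mem _ _ _
      rw [hemb ⟨j, hj⟩, ← rowVal_eq_emb T hT k ⟨j, hj⟩]
      exact (entry_eq_some T hT k hj).symm
    · unfold wEntry
      rw [dif_neg hj]
      symm
      rw [← Option.not_isSome_iff_eq_none, hT k j]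
      exact hj

end Cast10
end

/-- Castelnuovo's count: if g = (r+1)·s, the number of transposed SSYT of content
(r^g) filling exactly the (r+1)×(r·s) rectangle equals
g!·(1!·2!⋯r!)/(s!·(s+1)!⋯(s+r)!). -/
theorem stmt_10 (g r s : ℕ) (hg : g = (r + 1) * s) :
    (Nat.card {T : TrSSYT g r r // ∀ (i : Fin (r + 1)) (j : ℕ),
        (T.entry i j).isSome ↔ j < r * s} : ℚ) =
      (Nat.factorial g : ℚ) *
        (∏ t ∈ Finset.range (r + 1), (Nat.factorial t : ℚ)) /
        (∏ t ∈ Finset.range (r + 1), (Nat.factorial (s + t) : ℚ)) := by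
  classical
  rw [Cast10.card_eq g r s hg]
  have hsum : (∑ _k : Fin (r+1), s) = g := by
    simp [Finset.sum_const, Finset.card_univ, hg, mul_comm]
  have hcb := Cast10.count_ballot (r+1) g (fun _ => s) monotone_const hsum
  rw [hcb, Cast10.det_M_const r s, mul_div_assoc]
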